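/- Let A be a k×r integer matrix and B = {b₁,...,bₙ} a generating set of the integral kernel of A such that the ideal I_B = (x^{b⁺} - x^{b⁻} : b ∈ B) ⊆ ℤ[x₁,...,x_r] is saturated with respect to x₁⋯x_r. Then for every u ∈ ℕ^r the graph on the fibre F(u) = {v ∈ ℕ^r : Av = Au}, with an edge between distinct v₁, v₂ iff v₁ - v₂ ∈ B ∪ (-B), is connected. -/

import Mathlib

open MvPolynomial
noncomputable def xpow {r : ℕ} (d : Fin r → ℕ) : MvPolynomial (Fin r) ℤ :=
  ∏ j, X j ^ d j

def posPart {r : ℕ} (b : Fin r → ℤ) : Fin r → ℕ := fun j => (b j).toNat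
def negPart {r : ℕ} (b : Fin r → ℤ) : Fin r → ℕ := fun j => (-(b j)).toNat

namespace DS18

variable {r : ℕ}

noncomputable def toF (v : Fin r → ℕ) : Fin r →₀ ℕ := Finsupp.equivFunOnFinite.symm v

@[simp] lemma toF_apply (v : Fin r → ℕ) (j : Fin r) : toF v j = v j := rfl

lemma xpow_eq (v : Fin r → ℕ) : xpow v = monomial (toF v) 1 := by
  rw [← prod_X_pow_eq_monomial, xpow]
  exact (Finset.prod_subset (Finset.subset_univ _)
    (fun x _ hx => by
      have h0 : toF v x = 0 := Finsupp.notMem_support_iff.mp hx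
      have h0' : v x = 0 := by rw [← toF_apply v x, h0]
      rw [h0', pow_zero])).symm

lemma xpow_add (v w : Fin r → ℕ) : xpow (v + w) = xpow v * xpow w := by
  rw [xpow, xpow, xpow, ← Finset.prod_mul_distrib]
  exact Finset.prod_congr rfl fun j _ => by rw [Pi.add_apply, pow_add]

/-- The one-step move relation on `ℕ^r`. -/
def Rel (B : Finset (Fin r → ℤ)) (v w : Fin r → ℕ) : Prop :=
  ∃ b ∈ B, (fun i => (v i : ℤ) - (w i : ℤ)) = b ∨ (fun i => (v i : ℤ) - (w i : ℤ)) = -b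

lemma Rel.symm {B : Finset (Fin r → ℤ)} {v w : Fin r → ℕ} (h : Rel B v w) : Rel B w v := by
  obtain ⟨b, hb, h | h⟩ := h
  · refine ⟨b, hb, Or.inr ?_⟩
    funext i
    have := congrFun h i
    simp only [Pi.neg_apply] at this ⊢
    linarith
  · refine ⟨b, hb, Or.inl ?_⟩
    funext i
    have := congrFun h i
    simp only [Pi.neg_apply] at this ⊢
    linarith

def st (B : Finset (Fin r → ℤ)) : Setoid (Fin r → ℕ) :=
  ⟨Relation.ReflTransGen (Rel B),
    fun _ => Relation.ReflTransGen.refl,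
    fun h => by
      haveI : Std.Symm (Rel B) := ⟨fun _ _ hh => Rel.symm hh⟩
      apply Std.Symm.symm; exact h,
    Relation.ReflTransGen.trans⟩

def qf (B : Finset (Fin r → ℤ)) (d : Fin r →₀ ℕ) : Quotient (st B) :=
  Quotient.mk (st B) (fun i => d i)

noncomputable def phi (B : Finset (Fin r → ℤ)) :
    MvPolynomial (Fin r) ℤ →ₗ[ℤ] (Quotient (st B) →₀ ℤ) :=
  (Finsupp.lmapDomain ℤ ℤ (qf B)).comp (AddMonoidAlgebra.coeffLinearEquiv ℤ).toLinearMap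

lemma phi_monomial (B : Finset (Fin r → ℤ)) (d : Fin r →₀ ℕ) (c : ℤ) :
    phi B (monomial d c) = Finsupp.single (qf B d) c := by
  show Finsupp.mapDomain (qf B) (AddMonoidAlgebra.coeff (monomial d c)) = _
  rw [← single_eq_monomial, AddMonoidAlgebra.coeff_single, Finsupp.mapDomain_single]

lemma qf_rel (B : Finset (Fin r → ℤ)) {d e : Fin r →₀ ℕ}
    (h : Rel B (fun i => d i) (fun i => e i)) : qf B d = qf B e :=
  Quotient.sound (Relation.ReflTransGen.single h)

lemma phi_span_zero (B : Finset (Fin r → ℤ)) {p : MvPolynomial (Fin r) ℤ}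
    (hp : p ∈ Ideal.span
      ((fun b => xpow (_root_.posPart b) - xpow (_root_.negPart b)) '' (B : Set (Fin r → ℤ)))) :
    phi B p = 0 := by
  have main : ∀ d : Fin r →₀ ℕ, phi B (monomial d 1 * p) = 0 := by
    refine Submodule.span_induction
      (p := fun x _ => ∀ d : Fin r →₀ ℕ, phi B (monomial d 1 * x) = 0)
      ?_ ?_ ?_ ?_ hp
    · rintro x ⟨b, hb, rfl⟩ d
      show phi B (monomial d 1 * (xpow (_root_.posPart b) - xpow (_root_.negPart b))) = 0
      rw [xpow_eq, xpow_eq, mul_sub, monomial_mul, monomial_mul, one_mul, map_sub,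
        phi_monomial, phi_monomial]
      have hq : qf B (d + toF (_root_.posPart b)) = qf B (d + toF (_root_.negPart b)) := by
        refine qf_rel B ⟨b, hb, Or.inl ?_⟩
        funext i
        simp only [Finsupp.coe_add, Pi.add_apply, toF_apply, _root_.posPart, _root_.negPart]
        push_cast
        omega
      rw [hq, sub_self]
    · intro d; simp
    · intro x y _ _ hx hy d
      rw [mul_add, map_add, hx, hy, add_zero]
    · intro a x _ hx d
      rw [smul_eq_mul]
      induction a using MvPolynomial.induction_on' with
      | monomial e c =>
        have h1 : monomial d 1 * (monomial e c * x) = c • (monomial (d + e) 1 * x) := by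
          rw [← mul_assoc, monomial_mul, one_mul, ← smul_mul_assoc, smul_monomial,
            smul_eq_mul, mul_one]
        rw [h1, map_smul, hx, smul_zero]
      | add q q' hq hq' =>
        rw [add_mul, mul_add, map_add, hq, hq', add_zero]
  have h := main 0
  rwa [monomial_zero', C_1, one_mul] at h

lemma exists_rep {B : Finset (Fin r → ℤ)} {z : Fin r → ℤ}
    (hz : z ∈ AddSubgroup.closure (B : Set (Fin r → ℤ))) :
    ∃ a b : Fin r → ℕ, (∀ j, (a j : ℤ) - (b j : ℤ) = z j) ∧
      xpow a - xpow b ∈ Ideal.span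
        ((fun b => xpow (_root_.posPart b) - xpow (_root_.negPart b)) '' (B : Set (Fin r → ℤ))) := by
  refine AddSubgroup.closure_induction ?_ ?_ ?_ ?_ hz
  · intro x hx
    refine ⟨_root_.posPart x, _root_.negPart x, fun j => ?_,
      Ideal.subset_span ⟨x, hx, rfl⟩⟩
    show ((x j).toNat : ℤ) - ((-(x j)).toNat : ℤ) = x j
    omega
  · exact ⟨0, 0, fun j => by simp, by simp⟩
  · rintro x y _ _ ⟨a1, b1, h1, m1⟩ ⟨a2, b2, h2, m2⟩
    refine ⟨a1 + a2, b1 + b2, fun j => ?_, ?_⟩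
    · have e1 := h1 j; have e2 := h2 j
      simp only [Pi.add_apply] at *
      push_cast
      omega
    · have key : xpow (a1 + a2) - xpow (b1 + b2) =
          xpow a2 * (xpow a1 - xpow b1) + xpow b1 * (xpow a2 - xpow b2) := by
        rw [xpow_add, xpow_add]; ring
      rw [key]
      exact Ideal.add_mem _ (Ideal.mul_mem_left _ _ m1) (Ideal.mul_mem_left _ _ m2)
  · rintro x _ ⟨a, b, h, m⟩
    refine ⟨b, a, fun j => by have := h j; simp only [Pi.neg_apply]; linarith, ?_⟩
    have key : xpow b - xpow a = -(xpow a - xpow b) := by ring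
    rw [key]
    exact neg_mem m


lemma single_sub_zero {α : Type*} {a b : α} (h : Finsupp.single a (1:ℤ) - Finsupp.single b 1 = 0) :
    a = b := by
  by_contra hne
  have h2 := DFunLike.congr_fun h a
  rw [Finsupp.sub_apply, Finsupp.single_eq_same, Finsupp.single_eq_of_ne' (Ne.symm hne),
    Finsupp.zero_apply] at h2
  norm_num at h2

lemma mem_preserved {k : ℕ} (A : Matrix (Fin k) (Fin r) ℤ) {B : Finset (Fin r → ℤ)}
    (hker : ∀ b ∈ B, A.mulVec b = 0) {c d : Fin r → ℕ} (h : Rel B c d)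
    (X : Fin k → ℤ) (hc : A.mulVec (fun i => (c i : ℤ)) = X) :
    A.mulVec (fun i => (d i : ℤ)) = X := by
  obtain ⟨b, hb, hcd | hcd⟩ := h
  · have hd : (fun i => (d i : ℤ)) = (fun i => (c i : ℤ)) - b := by
      rw [← hcd]; funext i; simp
    rw [hd, Matrix.mulVec_sub, hker b hb, sub_zero, hc]
  · have hd : (fun i => (d i : ℤ)) = (fun i => (c i : ℤ)) + b := by
      rw [show (b : Fin r → ℤ) = -(-b) by simp, ← hcd]; funext i; simp
    rw [hd, Matrix.mulVec_add, hker b hb, add_zero, hc]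

lemma mem_chain {k : ℕ} (A : Matrix (Fin k) (Fin r) ℤ) {B : Finset (Fin r → ℤ)}
    (hker : ∀ b ∈ B, A.mulVec b = 0) {v c : Fin r → ℕ}
    (h : Relation.ReflTransGen (Rel B) v c) (X : Fin k → ℤ)
    (hv : A.mulVec (fun i => (v i : ℤ)) = X) :
    A.mulVec (fun i => (c i : ℤ)) = X := by
  induction h with
  | refl => exact hv
  | tail _ h1 ih => exact mem_preserved A hker h1 X ih

lemma chain {k : ℕ} (A : Matrix (Fin k) (Fin r) ℤ) {B : Finset (Fin r → ℤ)}
    (hker : ∀ b ∈ B, A.mulVec b = 0) (X : Fin k → ℤ)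
    (Adj : (Fin r → ℕ) → (Fin r → ℕ) → Prop)
    (hAdj : ∀ v w, A.mulVec (fun i => (v i : ℤ)) = X → A.mulVec (fun i => (w i : ℤ)) = X →
      v ≠ w → Rel B v w → Adj v w)
    {v w : Fin r → ℕ} (h : Relation.ReflTransGen (Rel B) v w)
    (hv : A.mulVec (fun i => (v i : ℤ)) = X) :
    Relation.ReflTransGen Adj v w := by
  induction h with
  | refl => exact .refl
  | @tail c d hvc h1 ih =>
    have hc := mem_chain A hker hvc X hv
    have hd := mem_preserved A hker h1 X hc
    by_cases hcd : c = d
    · subst hcd; exact ih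
    · exact ih.tail (hAdj c d hc hd hcd h1)

lemma qf_toF (B : Finset (Fin r → ℤ)) (v : Fin r → ℕ) :
    qf B (toF v) = Quotient.mk (st B) v := rfl

end DS18

open DS18

/-- Diaconis–Sturmfels: if `B` generates the integral kernel of `A` and the ideal
`I_B = (x^{b⁺} - x^{b⁻} : b ∈ B)` is saturated with respect to `x₁⋯x_r`, then for
every `u ∈ ℕ^r` the graph on the fibre `F(u)` with edges `v₁ - v₂ ∈ B ∪ (-B)` is
connected. -/
theorem stmt18 (k r : ℕ) (A : Matrix (Fin k) (Fin r) ℤ) (B : Finset (Fin r → ℤ))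
    (hker : ∀ b ∈ B, A.mulVec b = 0)
    (hgen : ∀ v : Fin r → ℤ, A.mulVec v = 0 →
      v ∈ AddSubgroup.closure (B : Set (Fin r → ℤ)))
    (hsat : {a : MvPolynomial (Fin r) ℤ | ∃ m : ℕ, 0 < m ∧ a * (∏ j, X j) ^ m ∈
        Ideal.span ((fun b => xpow (posPart b) - xpow (negPart b)) '' (B : Set (Fin r → ℤ)))}
      = (Ideal.span ((fun b => xpow (posPart b) - xpow (negPart b)) '' (B : Set (Fin r → ℤ)))
          : Set (MvPolynomial (Fin r) ℤ))) :
    ∀ u : Fin r → ℕ,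
      let F : Set (Fin r → ℕ) :=
        {v | A.mulVec (fun i => (v i : ℤ)) = A.mulVec (fun i => (u i : ℤ))}
      let Adj : (Fin r → ℕ) → (Fin r → ℕ) → Prop := fun v w =>
        v ∈ F ∧ w ∈ F ∧ v ≠ w ∧
          ∃ b ∈ B, (fun i => (v i : ℤ) - (w i : ℤ)) = b ∨
            (fun i => (v i : ℤ) - (w i : ℤ)) = -b
      ∀ v ∈ F, ∀ w ∈ F, Relation.ReflTransGen Adj v w := by
  intro u F Adj v hv w hw
  have hv' : A.mulVec (fun i => (v i : ℤ)) = A.mulVec (fun i => (u i : ℤ)) := hv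
  have hw' : A.mulVec (fun i => (w i : ℤ)) = A.mulVec (fun i => (u i : ℤ)) := hw
  -- the difference is in the kernel
  have hz : A.mulVec (fun i => (v i : ℤ) - (w i : ℤ)) = 0 := by
    have e : (fun i => (v i : ℤ) - (w i : ℤ)) =
        (fun i => (v i : ℤ)) - (fun i => (w i : ℤ)) := rfl
    rw [e, Matrix.mulVec_sub, hv', hw', sub_self]
  obtain ⟨a, b1, hab, hI⟩ := exists_rep (hgen _ hz)
  -- v + b1 = w + a
  have hfun : v + b1 = w + a := by
    funext j
    have := hab j
    show v j + b1 j = w j + a j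
    omega
  have hmul : (xpow v - xpow w) * xpow b1 = xpow w * (xpow a - xpow b1) := by
    rw [sub_mul, ← xpow_add v b1, ← xpow_add w b1, hfun, xpow_add, xpow_add, ← mul_sub]
  have hmem1 : (xpow v - xpow w) * xpow b1 ∈
      Ideal.span ((fun b => xpow (_root_.posPart b) - xpow (_root_.negPart b)) '' (B : Set (Fin r → ℤ))) := by
    rw [hmul]; exact Ideal.mul_mem_left _ _ hI
  set m : ℕ := (∑ j, b1 j) + 1 with hm
  have hble : ∀ j, b1 j ≤ m := fun j =>
    le_trans (Finset.single_le_sum (fun i _ => Nat.zero_le (b1 i)) (Finset.mem_univ j))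
      (Nat.le_succ _)
  have hbc : b1 + (fun j => m - b1 j) = fun _ => m := by
    funext j
    show b1 j + (m - b1 j) = m
    have := hble j
    omega
  have hpow : ((∏ j, X j : MvPolynomial (Fin r) ℤ)) ^ m = xpow (fun _ => m) := by
    rw [xpow, ← Finset.prod_pow]
  have hmem2 : (xpow v - xpow w) * (∏ j, (X j : MvPolynomial (Fin r) ℤ)) ^ m ∈
      Ideal.span ((fun b => xpow (_root_.posPart b) - xpow (_root_.negPart b)) '' (B : Set (Fin r → ℤ))) := by
    have e : (xpow v - xpow w) * (∏ j, (X j : MvPolynomial (Fin r) ℤ)) ^ m =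
        ((xpow v - xpow w) * xpow b1) * xpow (fun j => m - b1 j) := by
      rw [hpow, ← hbc, xpow_add]; ring
    rw [e]
    exact Ideal.mul_mem_right _ _ hmem1
  have hIn : xpow v - xpow w ∈
      Ideal.span ((fun b => xpow (_root_.posPart b) - xpow (_root_.negPart b)) '' (B : Set (Fin r → ℤ))) := by
    have hx : xpow v - xpow w ∈ {a : MvPolynomial (Fin r) ℤ | ∃ m : ℕ, 0 < m ∧
        a * (∏ j, X j) ^ m ∈ Ideal.span
          ((fun b => xpow (_root_.posPart b) - xpow (_root_.negPart b)) '' (B : Set (Fin r → ℤ)))} :=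
      ⟨m, Nat.succ_pos _, hmem2⟩
    rw [hsat] at hx
    exact hx
  have h0 := phi_span_zero B hIn
  rw [map_sub, xpow_eq, xpow_eq, phi_monomial, phi_monomial] at h0
  have hq : qf B (toF v) = qf B (toF w) := single_sub_zero h0
  rw [qf_toF, qf_toF] at hq
  have hvw : Relation.ReflTransGen (Rel B) v w := Quotient.exact hq
  exact chain A hker (A.mulVec (fun i => (u i : ℤ))) Adj
    (fun v w h1 h2 h3 h4 => ⟨h1, h2, h3, h4⟩) hvw hv'
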